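/- Matrix factorization: fix a target matrix C ∈ ℝ^{n×m} and an integer r ≥ 1, and define f(X, Y) = ½‖XY − C‖²_F on the space ℝ^{n×r} × ℝ^{r×m} (of dimension nr + rm), where ‖·‖_F is the Frobenius norm. Then f is non-convex of grade max{n, m}·r: at every point (X, Y) there exists a linear subspace of ℝ^{n×r} × ℝ^{r×m} of dimension at least max{n, m}·r on which the Hessian quadratic form of f at (X, Y) is nonnegative. -/

import Mathlib

open scoped RealInnerProductSpace
open Real Set

section MFAux

variable {n m r : ℕ}

private noncomputable def mfD (p : Fin n × Fin m)
    (x : EuclideanSpace ℝ (Fin n × Fin r) × EuclideanSpace ℝ (Fin r × Fin m)) :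
    (EuclideanSpace ℝ (Fin n × Fin r) × EuclideanSpace ℝ (Fin r × Fin m)) →L[ℝ] ℝ :=
  ∑ k : Fin r, ((x.2 (k, p.2)) • ((EuclideanSpace.proj (p.1, k)).comp
      (ContinuousLinearMap.fst ℝ _ _))
    + (x.1 (p.1, k)) • ((EuclideanSpace.proj (k, p.2)).comp (ContinuousLinearMap.snd ℝ _ _)))

private lemma mfD_apply (p : Fin n × Fin m)
    (x v : EuclideanSpace ℝ (Fin n × Fin r) × EuclideanSpace ℝ (Fin r × Fin m)) :
    mfD p x v = ∑ k : Fin r, (x.2 (k, p.2) * v.1 (p.1, k) + x.1 (p.1, k) * v.2 (k, p.2)) := by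
  simp [mfD]

private lemma mfD_symm (p : Fin n × Fin m)
    (x v : EuclideanSpace ℝ (Fin n × Fin r) × EuclideanSpace ℝ (Fin r × Fin m)) :
    mfD p x v = mfD p v x := by
  simp only [mfD_apply]
  exact Finset.sum_congr rfl fun k _ => by ring

private noncomputable def mfa (C : Matrix (Fin n) (Fin m) ℝ) (p : Fin n × Fin m)
    (x : EuclideanSpace ℝ (Fin n × Fin r) × EuclideanSpace ℝ (Fin r × Fin m)) : ℝ :=
  (∑ k : Fin r, x.1 (p.1, k) * x.2 (k, p.2)) - C p.1 p.2

private lemma mf_hasFDeriv1 (p : Fin n × Fin m) (k : Fin r)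
    (x : EuclideanSpace ℝ (Fin n × Fin r) × EuclideanSpace ℝ (Fin r × Fin m)) :
    HasFDerivAt (fun y : EuclideanSpace ℝ (Fin n × Fin r) × EuclideanSpace ℝ (Fin r × Fin m) =>
        y.1 (p.1, k))
      ((EuclideanSpace.proj (p.1, k)).comp (ContinuousLinearMap.fst ℝ _ _)) x := by
  have := ((EuclideanSpace.proj (𝕜 := ℝ) (p.1, k)).comp
    (ContinuousLinearMap.fst ℝ (EuclideanSpace ℝ (Fin n × Fin r))
      (EuclideanSpace ℝ (Fin r × Fin m)))).hasFDerivAt (x := x)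
  exact this

private lemma mf_hasFDeriv2 (p : Fin n × Fin m) (k : Fin r)
    (x : EuclideanSpace ℝ (Fin n × Fin r) × EuclideanSpace ℝ (Fin r × Fin m)) :
    HasFDerivAt (fun y : EuclideanSpace ℝ (Fin n × Fin r) × EuclideanSpace ℝ (Fin r × Fin m) =>
        y.2 (k, p.2))
      ((EuclideanSpace.proj (k, p.2)).comp (ContinuousLinearMap.snd ℝ _ _)) x := by
  have := ((EuclideanSpace.proj (𝕜 := ℝ) (k, p.2)).comp
    (ContinuousLinearMap.snd ℝ (EuclideanSpace ℝ (Fin n × Fin r))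
      (EuclideanSpace ℝ (Fin r × Fin m)))).hasFDerivAt (x := x)
  exact this

private lemma mfa_hasFDerivAt (C : Matrix (Fin n) (Fin m) ℝ) (p : Fin n × Fin m)
    (x : EuclideanSpace ℝ (Fin n × Fin r) × EuclideanSpace ℝ (Fin r × Fin m)) :
    HasFDerivAt (mfa C p) (mfD p x) x := by
  unfold mfa mfD
  apply HasFDerivAt.sub_const
  apply HasFDerivAt.fun_sum
  intro k _
  have := (mf_hasFDeriv1 p k x).mul (mf_hasFDeriv2 p k x)
  rwa [add_comm] at this

private lemma mfa_contDiff (C : Matrix (Fin n) (Fin m) ℝ) (p : Fin n × Fin m) :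
    ContDiff ℝ 2 (mfa (r := r) C p) := by
  unfold mfa
  apply ContDiff.sub _ contDiff_const
  apply ContDiff.sum
  intro k _
  have c1 : ContDiff ℝ 2 (fun y : EuclideanSpace ℝ (Fin n × Fin r) ×
      EuclideanSpace ℝ (Fin r × Fin m) => y.1 (p.1, k)) := by
    have := ((EuclideanSpace.proj (𝕜 := ℝ) (p.1, k)).comp
      (ContinuousLinearMap.fst ℝ (EuclideanSpace ℝ (Fin n × Fin r))
        (EuclideanSpace ℝ (Fin r × Fin m)))).contDiff (n := 2)
    exact this
  have c2 : ContDiff ℝ 2 (fun y : EuclideanSpace ℝ (Fin n × Fin r) ×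
      EuclideanSpace ℝ (Fin r × Fin m) => y.2 (k, p.2)) := by
    have := ((EuclideanSpace.proj (𝕜 := ℝ) (k, p.2)).comp
      (ContinuousLinearMap.snd ℝ (EuclideanSpace ℝ (Fin n × Fin r))
        (EuclideanSpace ℝ (Fin r × Fin m)))).contDiff (n := 2)
    exact this
  exact c1.mul c2

private lemma mf_key (C : Matrix (Fin n) (Fin m) ℝ)
    (f : EuclideanSpace ℝ (Fin n × Fin r) × EuclideanSpace ℝ (Fin r × Fin m) → ℝ)
    (hf : ∀ X : EuclideanSpace ℝ (Fin n × Fin r), ∀ Y : EuclideanSpace ℝ (Fin r × Fin m),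
      f (X, Y) = (1 / 2) * ∑ p : Fin n × Fin m,
        ((∑ k : Fin r, X (p.1, k) * Y (k, p.2)) - C p.1 p.2) ^ 2)
    (z h : EuclideanSpace ℝ (Fin n × Fin r) × EuclideanSpace ℝ (Fin r × Fin m))
    (hcross : ∀ p : Fin n × Fin m, ∑ k : Fin r, h.1 (p.1, k) * h.2 (k, p.2) = 0) :
    0 ≤ iteratedFDeriv ℝ 2 f z ![h, h] := by
  have hfe : f = fun x => (1 / 2 : ℝ) * ∑ p : Fin n × Fin m, (mfa C p x) ^ 2 :=
    funext fun x => hf x.1 x.2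
  -- first derivative
  have hF : ∀ x, HasFDerivAt f (∑ p : Fin n × Fin m, mfa C p x • mfD p x) x := by
    intro x
    rw [hfe]
    have h1 : HasFDerivAt (fun x => ∑ p : Fin n × Fin m, (mfa C p x) ^ 2)
        (∑ p : Fin n × Fin m, (mfa C p x • mfD p x + mfa C p x • mfD p x)) x := by
      apply HasFDerivAt.fun_sum
      intro p _
      have := (mfa_hasFDerivAt C p x).fun_mul (mfa_hasFDerivAt C p x)
      have heq : (fun y : EuclideanSpace ℝ (Fin n × Fin r) × EuclideanSpace ℝ (Fin r × Fin m) =>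
          mfa C p y * mfa C p y) = fun y => (mfa C p y) ^ 2 := by
        funext y; ring
      rwa [heq] at this
    have h2 := h1.const_mul (1 / 2 : ℝ)
    refine h2.congr_fderiv ?_
    rw [Finset.smul_sum]
    refine Finset.sum_congr rfl fun p _ => ?_
    rw [← add_smul, smul_smul]
    congr 1
    ring
  have hΦ : ∀ x, fderiv ℝ f x = ∑ p : Fin n × Fin m, mfa C p x • mfD p x :=
    fun x => (hF x).fderiv
  -- smoothness
  have hC2 : ContDiff ℝ 2 f := by
    rw [hfe]
    exact contDiff_const.mul (ContDiff.sum fun p _ => (mfa_contDiff C p).pow 2)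
  have hdiff : DifferentiableAt ℝ (fderiv ℝ f) z :=
    ((hC2.fderiv_right (m := 1) (by norm_num)).differentiable one_ne_zero) z
  rw [iteratedFDeriv_two_apply]
  simp only [Matrix.cons_val_zero, Matrix.cons_val_one, Matrix.head_cons]
  -- reduce to the directional derivative of x ↦ fderiv f x h
  have e1 : fderiv ℝ (fun x => fderiv ℝ f x h) z = (fderiv ℝ (fderiv ℝ f) z).flip h := by
    rw [fderiv_clm_apply hdiff (differentiableAt_const h)]
    simp
  have e2 : (fun x => fderiv ℝ f x h) = fun x => ∑ p : Fin n × Fin m, mfa C p x * mfD p h x := by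
    funext x
    rw [hΦ x]
    simp only [ContinuousLinearMap.sum_apply, ContinuousLinearMap.smul_apply, smul_eq_mul]
    exact Finset.sum_congr rfl fun p _ => by rw [mfD_symm]
  have hu : HasFDerivAt (fun x => ∑ p : Fin n × Fin m, mfa C p x * mfD p h x)
      (∑ p : Fin n × Fin m, (mfa C p z • mfD p h + mfD p h z • mfD p z)) z :=
    HasFDerivAt.fun_sum fun p _ => (mfa_hasFDerivAt C p z).mul (mfD p h).hasFDerivAt
  have e3 : fderiv ℝ (fderiv ℝ f) z h h = ∑ p : Fin n × Fin m, (mfD p z h) ^ 2 := by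
    have e4 : fderiv ℝ (fun x => fderiv ℝ f x h) z h = fderiv ℝ (fderiv ℝ f) z h h := by
      rw [e1, ContinuousLinearMap.flip_apply]
    rw [← e4, e2, hu.fderiv]
    simp only [ContinuousLinearMap.sum_apply, ContinuousLinearMap.add_apply,
      ContinuousLinearMap.smul_apply, smul_eq_mul]
    refine Finset.sum_congr rfl fun p _ => ?_
    have hD0 : mfD p h h = 0 := by
      rw [mfD_apply,
        Finset.sum_congr rfl (fun k _ => show h.2 (k, p.2) * h.1 (p.1, k) +
          h.1 (p.1, k) * h.2 (k, p.2) = 2 * (h.1 (p.1, k) * h.2 (k, p.2)) by ring),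
        ← Finset.mul_sum, hcross p, mul_zero]
    rw [hD0, mfD_symm p h z]
    ring
  rw [e3]
  exact Finset.sum_nonneg fun p _ => sq_nonneg _

end MFAux

/-- Matrix factorization: `f(X, Y) = ½‖XY − C‖²_F` on `ℝ^{n×r} × ℝ^{r×m}` is non-convex of
grade `max{n, m}·r`: at every point there is a linear subspace of dimension at least
`max{n, m}·r` on which the Hessian quadratic form of `f` is nonnegative. -/
theorem matrix_factorization_graded {n m r : ℕ} (hr : 1 ≤ r)
    (C : Matrix (Fin n) (Fin m) ℝ)
    (f : EuclideanSpace ℝ (Fin n × Fin r) × EuclideanSpace ℝ (Fin r × Fin m) → ℝ)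
    (hf : ∀ X : EuclideanSpace ℝ (Fin n × Fin r), ∀ Y : EuclideanSpace ℝ (Fin r × Fin m),
      f (X, Y) = (1 / 2) * ∑ p : Fin n × Fin m,
        ((∑ k : Fin r, X (p.1, k) * Y (k, p.2)) - C p.1 p.2) ^ 2) :
    ∀ z : EuclideanSpace ℝ (Fin n × Fin r) × EuclideanSpace ℝ (Fin r × Fin m),
      ∃ V : Submodule ℝ (EuclideanSpace ℝ (Fin n × Fin r) × EuclideanSpace ℝ (Fin r × Fin m)),
        max n m * r ≤ Module.finrank ℝ V ∧
        ∀ h ∈ V, 0 ≤ iteratedFDeriv ℝ 2 f z ![h, h] := by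
  intro z
  rcases le_total m n with hmn | hnm
  · refine ⟨LinearMap.range (LinearMap.inl ℝ (EuclideanSpace ℝ (Fin n × Fin r))
      (EuclideanSpace ℝ (Fin r × Fin m))), ?_, ?_⟩
    · rw [LinearMap.finrank_range_of_inj LinearMap.inl_injective, finrank_euclideanSpace,
        Fintype.card_prod, Fintype.card_fin, Fintype.card_fin, max_eq_left hmn]
    · intro h hh
      obtain ⟨x, rfl⟩ := LinearMap.mem_range.mp hh
      refine mf_key C f hf z _ fun p => ?_
      simp [LinearMap.inl_apply]
  · refine ⟨LinearMap.range (LinearMap.inr ℝ (EuclideanSpace ℝ (Fin n × Fin r))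
      (EuclideanSpace ℝ (Fin r × Fin m))), ?_, ?_⟩
    · rw [LinearMap.finrank_range_of_inj LinearMap.inr_injective, finrank_euclideanSpace,
        Fintype.card_prod, Fintype.card_fin, Fintype.card_fin, max_eq_right hnm, Nat.mul_comm]
    · intro h hh
      obtain ⟨x, rfl⟩ := LinearMap.mem_range.mp hh
      refine mf_key C f hf z _ fun p => ?_
      simp [LinearMap.inr_apply]
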